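/- Let M ∈ ℝ^{4n×4n} be a JRS-symmetric matrix. Then there exists an orthogonally JRS-symplectic matrix W ∈ ℝ^{4n×4n} such that W M Wᵀ = H is an upper JRS-Hessenberg matrix. -/

import Mathlib

open Matrix Quaternion
open scoped Kronecker Quaternion

noncomputable section

/-- The 4×4 coefficient matrix of `J`. -/
def Jb : Matrix (Fin 4) (Fin 4) ℝ := !![0,0,-1,0; 0,0,0,-1; 1,0,0,0; 0,1,0,0]
/-- The 4×4 coefficient matrix of `R`. -/
def Rb : Matrix (Fin 4) (Fin 4) ℝ := !![0,-1,0,0; 1,0,0,0; 0,0,0,1; 0,0,-1,0]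
/-- The 4×4 coefficient matrix of `S`. -/
def Sb : Matrix (Fin 4) (Fin 4) ℝ := !![0,0,0,-1; 0,0,1,0; 0,-1,0,0; 1,0,0,0]

/-- `J_n = [[0,0,−I_n,0],[0,0,0,−I_n],[I_n,0,0,0],[0,I_n,0,0]]`. -/
def JJ (n : ℕ) : Matrix (Fin 4 × Fin n) (Fin 4 × Fin n) ℝ :=
  Jb ⊗ₖ (1 : Matrix (Fin n) (Fin n) ℝ)
/-- `R_n = [[0,−I_n,0,0],[I_n,0,0,0],[0,0,0,I_n],[0,0,−I_n,0]]`. -/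
def RRm (n : ℕ) : Matrix (Fin 4 × Fin n) (Fin 4 × Fin n) ℝ :=
  Rb ⊗ₖ (1 : Matrix (Fin n) (Fin n) ℝ)
/-- `S_n = [[0,0,0,−I_n],[0,0,I_n,0],[0,−I_n,0,0],[I_n,0,0,0]]`. -/
def SSm (n : ℕ) : Matrix (Fin 4 × Fin n) (Fin 4 × Fin n) ℝ :=
  Sb ⊗ₖ (1 : Matrix (Fin n) (Fin n) ℝ)

/-- A real 4m×4n matrix `M` is JRS-symmetric if `J_m M J_nᵀ = M`,
`R_m M R_nᵀ = M` and `S_m M S_nᵀ = M`. -/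
def JRSSymmetric {m n : ℕ} (M : Matrix (Fin 4 × Fin m) (Fin 4 × Fin n) ℝ) : Prop :=
  JJ m * M * (JJ n)ᵀ = M ∧ RRm m * M * (RRm n)ᵀ = M ∧ SSm m * M * (SSm n)ᵀ = M

/-- A real 4m×4n matrix `O` is JRS-symplectic if `O J_n Oᵀ = J_m`,
`O R_n Oᵀ = R_m` and `O S_n Oᵀ = S_m`. -/
def JRSSymplectic {m n : ℕ} (O : Matrix (Fin 4 × Fin m) (Fin 4 × Fin n) ℝ) : Prop :=
  O * JJ n * Oᵀ = JJ m ∧ O * RRm n * Oᵀ = RRm m ∧ O * SSm n * Oᵀ = SSm m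

/-- A real 4n×4n matrix is orthogonally JRS-symplectic if it is orthogonal
and JRS-symplectic. -/
def OrthoJRSSymplectic {n : ℕ} (W : Matrix (Fin 4 × Fin n) (Fin 4 × Fin n) ℝ) : Prop :=
  Wᵀ * W = 1 ∧ JRSSymplectic W

/-- The 4m×4n block matrix
`[[Q₀,Q₂,Q₁,Q₃],[−Q₂,Q₀,Q₃,−Q₁],[−Q₁,−Q₃,Q₀,Q₂],[−Q₃,Q₁,−Q₂,Q₀]]`. -/
def upsilonBlocks {m n : ℕ} (Q0 Q1 Q2 Q3 : Matrix (Fin m) (Fin n) ℝ) :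
    Matrix (Fin 4 × Fin m) (Fin 4 × Fin n) ℝ := fun p q =>
  !![Q0 p.2 q.2, Q2 p.2 q.2, Q1 p.2 q.2, Q3 p.2 q.2;
     -(Q2 p.2 q.2), Q0 p.2 q.2, Q3 p.2 q.2, -(Q1 p.2 q.2);
     -(Q1 p.2 q.2), -(Q3 p.2 q.2), Q0 p.2 q.2, Q2 p.2 q.2;
     -(Q3 p.2 q.2), Q1 p.2 q.2, -(Q2 p.2 q.2), Q0 p.2 q.2] p.1 q.1

/-- The real counterpart `Υ_Q` of a quaternion matrix `Q`. -/
def Upsilon {m n : ℕ} (Q : Matrix (Fin m) (Fin n) ℍ[ℝ]) :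
    Matrix (Fin 4 × Fin m) (Fin 4 × Fin n) ℝ :=
  upsilonBlocks (fun i j => (Q i j).re) (fun i j => (Q i j).imI)
    (fun i j => (Q i j).imJ) (fun i j => (Q i j).imK)

/-- Upper Hessenberg: zero below the first subdiagonal. -/
def UpperHessenbergM {n : ℕ} (A : Matrix (Fin n) (Fin n) ℝ) : Prop :=
  ∀ i j : Fin n, (j : ℕ) + 1 < (i : ℕ) → A i j = 0

/-- Upper triangular: zero below the diagonal. -/
def UpperTriangularM {m n : ℕ} (A : Matrix (Fin m) (Fin n) ℝ) : Prop :=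
  ∀ (i : Fin m) (j : Fin n), (j : ℕ) < (i : ℕ) → A i j = 0

/-- Strictly upper triangular: zero on and below the diagonal. -/
def StrictlyUpperTriangularM {m n : ℕ} (A : Matrix (Fin m) (Fin n) ℝ) : Prop :=
  ∀ (i : Fin m) (j : Fin n), (j : ℕ) ≤ (i : ℕ) → A i j = 0

/-- Tridiagonal: zero outside the three central diagonals. -/
def TridiagonalM {n : ℕ} (A : Matrix (Fin n) (Fin n) ℝ) : Prop :=
  ∀ i j : Fin n, ((i : ℕ) + 1 < (j : ℕ) ∨ (j : ℕ) + 1 < (i : ℕ)) → A i j = 0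

namespace JRSAux

abbrev K := ℍ[ℝ]

def phi (q : K) : Matrix (Fin 4) (Fin 4) ℝ :=
  !![q.re, q.imJ, q.imI, q.imK;
     -q.imJ, q.re, q.imK, -q.imI;
     -q.imI, -q.imK, q.re, q.imJ;
     -q.imK, q.imI, -q.imJ, q.re]

lemma Upsilon_apply {m n : ℕ} (Q : Matrix (Fin m) (Fin n) K) (p : Fin 4 × Fin m)
    (q : Fin 4 × Fin n) : Upsilon Q p q = phi (Q p.2 q.2) p.1 q.1 := rfl

lemma phi_zero : phi 0 = 0 := by
  ext i j; fin_cases i <;> fin_cases j <;> simp [phi, Matrix.vecHead, Matrix.vecTail]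

lemma phi_mul (p q : K) : phi (p * q) = phi p * phi q := by
  ext i j
  fin_cases i <;> fin_cases j <;>
    simp [phi, Matrix.mul_apply, Fin.sum_univ_four] <;> ring

lemma phi_one : phi 1 = 1 := by
  ext i j
  fin_cases i <;> fin_cases j <;> simp [phi, Matrix.one_apply, Matrix.vecHead, Matrix.vecTail]

lemma phi_star (q : K) : phi (star q) = (phi q)ᵀ := by
  ext i j
  fin_cases i <;> fin_cases j <;> simp [phi, Matrix.vecHead, Matrix.vecTail]

def phiHom : K →+ Matrix (Fin 4) (Fin 4) ℝ where
  toFun := phi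
  map_zero' := by ext i j; fin_cases i <;> fin_cases j <;> simp [phi, Matrix.vecHead, Matrix.vecTail]
  map_add' p q := by
    ext i j; fin_cases i <;> fin_cases j <;> simp [phi] <;> ring

lemma Upsilon_mul {m n p : ℕ} (A : Matrix (Fin m) (Fin n) K) (B : Matrix (Fin n) (Fin p) K) :
    Upsilon (A * B) = Upsilon A * Upsilon B := by
  ext ⟨a, i⟩ ⟨b, j⟩
  rw [Matrix.mul_apply, Upsilon_apply, Matrix.mul_apply]
  have : (∑ k, A i k * B k j) = ∑ k, A i k * B k j := rfl
  calc phi (∑ k, A i k * B k j) a b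
      = (∑ k, phi (A i k * B k j)) a b := by
        rw [show phi (∑ k, A i k * B k j) = ∑ k, phi (A i k * B k j) from
          map_sum phiHom _ _]
    _ = ∑ k, (phi (A i k) * phi (B k j)) a b := by
        rw [Matrix.sum_apply]
        exact Finset.sum_congr rfl fun k _ => by rw [phi_mul]
    _ = ∑ k, ∑ c, phi (A i k) a c * phi (B k j) c b := by
        exact Finset.sum_congr rfl fun k _ => Matrix.mul_apply
    _ = ∑ x : Fin 4 × Fin n, Upsilon A (a, i) x * Upsilon B x (b, j) := by
        rw [Fintype.sum_prod_type]
        rw [Finset.sum_comm]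
        exact Finset.sum_congr rfl fun k _ => Finset.sum_congr rfl fun c _ => rfl

lemma Upsilon_one {n : ℕ} : Upsilon (1 : Matrix (Fin n) (Fin n) K) = 1 := by
  ext ⟨a, i⟩ ⟨b, j⟩
  rw [Upsilon_apply]
  by_cases h : i = j
  · subst h
    simp [Matrix.one_apply, Prod.ext_iff, phi_one]
  · simp [Matrix.one_apply, Prod.ext_iff, h, show (1 : Matrix (Fin n) (Fin n) K) i j = 0 from
      Matrix.one_apply_ne h, phi_zero]

lemma Upsilon_conjTranspose {m n : ℕ} (A : Matrix (Fin m) (Fin n) K) :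
    Upsilon Aᴴ = (Upsilon A)ᵀ := by
  ext ⟨a, i⟩ ⟨b, j⟩
  rw [Upsilon_apply, Matrix.transpose_apply, Upsilon_apply]
  rw [Matrix.conjTranspose_apply, phi_star, Matrix.transpose_apply]

lemma kron_mul_apply {m n : ℕ} (Xb : Matrix (Fin 4) (Fin 4) ℝ)
    (M : Matrix (Fin 4 × Fin m) (Fin 4 × Fin n) ℝ) (a : Fin 4) (i : Fin m)
    (q : Fin 4 × Fin n) :
    ((Xb ⊗ₖ (1 : Matrix (Fin m) (Fin m) ℝ)) * M) (a, i) q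
      = ∑ c, Xb a c * M (c, i) q := by
  rw [Matrix.mul_apply, Fintype.sum_prod_type]
  simp [Matrix.kroneckerMap_apply, Matrix.one_apply, mul_comm]

lemma mul_kronT_apply {m n : ℕ} (Xb : Matrix (Fin 4) (Fin 4) ℝ)
    (M : Matrix (Fin 4 × Fin m) (Fin 4 × Fin n) ℝ) (p : Fin 4 × Fin m)
    (b : Fin 4) (j : Fin n) :
    (M * (Xb ⊗ₖ (1 : Matrix (Fin n) (Fin n) ℝ))ᵀ) p (b, j)
      = ∑ d, Xb b d * M p (d, j) := by
  rw [Matrix.mul_apply, Fintype.sum_prod_type]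
  simp [Matrix.kroneckerMap_apply, Matrix.one_apply, mul_comm]

lemma conjK_apply {m n : ℕ} (Xb : Matrix (Fin 4) (Fin 4) ℝ)
    (M : Matrix (Fin 4 × Fin m) (Fin 4 × Fin n) ℝ) (a b : Fin 4) (i : Fin m) (j : Fin n) :
    ((Xb ⊗ₖ (1 : Matrix (Fin m) (Fin m) ℝ)) * M * (Xb ⊗ₖ (1 : Matrix (Fin n) (Fin n) ℝ))ᵀ) (a, i) (b, j)
      = ∑ c, ∑ d, Xb a c * (Xb b d * M (c, i) (d, j)) := by
  rw [mul_kronT_apply]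
  simp_rw [kron_mul_apply, Finset.mul_sum]
  rw [Finset.sum_comm]
  exact Finset.sum_congr rfl fun c _ => Finset.sum_congr rfl fun d _ => by ring

lemma mul_kron_apply {m n : ℕ} (Xb : Matrix (Fin 4) (Fin 4) ℝ)
    (M : Matrix (Fin 4 × Fin m) (Fin 4 × Fin n) ℝ) (p : Fin 4 × Fin m)
    (b : Fin 4) (j : Fin n) :
    (M * (Xb ⊗ₖ (1 : Matrix (Fin n) (Fin n) ℝ))) p (b, j)
      = ∑ d, M p (d, j) * Xb d b := by
  rw [Matrix.mul_apply, Fintype.sum_prod_type]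
  simp [Matrix.kroneckerMap_apply, Matrix.one_apply]

lemma Jb_comm_phi (q : K) : Jb * phi q = phi q * Jb := by
  ext i j; fin_cases i <;> fin_cases j <;>
    simp [Jb, phi, Matrix.mul_apply, Fin.sum_univ_four, Matrix.vecHead, Matrix.vecTail] <;> ring

lemma Rb_comm_phi (q : K) : Rb * phi q = phi q * Rb := by
  ext i j; fin_cases i <;> fin_cases j <;>
    simp [Rb, phi, Matrix.mul_apply, Fin.sum_univ_four, Matrix.vecHead, Matrix.vecTail] <;> ring

lemma Sb_comm_phi (q : K) : Sb * phi q = phi q * Sb := by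
  ext i j; fin_cases i <;> fin_cases j <;>
    simp [Sb, phi, Matrix.mul_apply, Fin.sum_univ_four, Matrix.vecHead, Matrix.vecTail] <;> ring

lemma JJ_comm_Upsilon {n : ℕ} (A : Matrix (Fin n) (Fin n) K) :
    JJ n * Upsilon A = Upsilon A * JJ n := by
  ext ⟨a, i⟩ ⟨b, j⟩
  rw [show JJ n = Jb ⊗ₖ (1 : Matrix (Fin n) (Fin n) ℝ) from rfl]
  rw [kron_mul_apply, mul_kron_apply]
  simp_rw [Upsilon_apply]
  calc (∑ c, Jb a c * phi (A i j) c b) = (Jb * phi (A i j)) a b := (Matrix.mul_apply).symm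
    _ = (phi (A i j) * Jb) a b := by rw [Jb_comm_phi]
    _ = ∑ d, phi (A i j) a d * Jb d b := Matrix.mul_apply

lemma RR_comm_Upsilon {n : ℕ} (A : Matrix (Fin n) (Fin n) K) :
    RRm n * Upsilon A = Upsilon A * RRm n := by
  ext ⟨a, i⟩ ⟨b, j⟩
  rw [show RRm n = Rb ⊗ₖ (1 : Matrix (Fin n) (Fin n) ℝ) from rfl]
  rw [kron_mul_apply, mul_kron_apply]
  simp_rw [Upsilon_apply]
  calc (∑ c, Rb a c * phi (A i j) c b) = (Rb * phi (A i j)) a b := (Matrix.mul_apply).symm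
    _ = (phi (A i j) * Rb) a b := by rw [Rb_comm_phi]
    _ = ∑ d, phi (A i j) a d * Rb d b := Matrix.mul_apply

lemma SS_comm_Upsilon {n : ℕ} (A : Matrix (Fin n) (Fin n) K) :
    SSm n * Upsilon A = Upsilon A * SSm n := by
  ext ⟨a, i⟩ ⟨b, j⟩
  rw [show SSm n = Sb ⊗ₖ (1 : Matrix (Fin n) (Fin n) ℝ) from rfl]
  rw [kron_mul_apply, mul_kron_apply]
  simp_rw [Upsilon_apply]
  calc (∑ c, Sb a c * phi (A i j) c b) = (Sb * phi (A i j)) a b := (Matrix.mul_apply).symm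
    _ = (phi (A i j) * Sb) a b := by rw [Sb_comm_phi]
    _ = ∑ d, phi (A i j) a d * Sb d b := Matrix.mul_apply

def Qext {m n : ℕ} (M : Matrix (Fin 4 × Fin m) (Fin 4 × Fin n) ℝ) : Matrix (Fin m) (Fin n) K :=
  fun i j =>
    ⟨(M (0,i) (0,j) + M (1,i) (1,j) + M (2,i) (2,j) + M (3,i) (3,j))/4,
     (M (0,i) (2,j) - M (2,i) (0,j) + M (3,i) (1,j) - M (1,i) (3,j))/4,
     (M (0,i) (1,j) - M (1,i) (0,j) + M (2,i) (3,j) - M (3,i) (2,j))/4,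
     (M (0,i) (3,j) - M (3,i) (0,j) + M (1,i) (2,j) - M (2,i) (1,j))/4⟩

lemma avg_eq {m n : ℕ} (M : Matrix (Fin 4 × Fin m) (Fin 4 × Fin n) ℝ) :
    Upsilon (Qext M) = (4:ℝ)⁻¹ •
      (M + JJ m * M * (JJ n)ᵀ + RRm m * M * (RRm n)ᵀ + SSm m * M * (SSm n)ᵀ) := by
  ext ⟨a, i⟩ ⟨b, j⟩
  rw [Upsilon_apply]
  rw [show JJ m * M * (JJ n)ᵀ = Jb ⊗ₖ (1 : Matrix (Fin m) (Fin m) ℝ) * M * (Jb ⊗ₖ (1 : Matrix (Fin n) (Fin n) ℝ))ᵀ from rfl,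
      show RRm m * M * (RRm n)ᵀ = Rb ⊗ₖ (1 : Matrix (Fin m) (Fin m) ℝ) * M * (Rb ⊗ₖ (1 : Matrix (Fin n) (Fin n) ℝ))ᵀ from rfl,
      show SSm m * M * (SSm n)ᵀ = Sb ⊗ₖ (1 : Matrix (Fin m) (Fin m) ℝ) * M * (Sb ⊗ₖ (1 : Matrix (Fin n) (Fin n) ℝ))ᵀ from rfl]
  simp only [Matrix.smul_apply, Matrix.add_apply, conjK_apply, Fin.sum_univ_four, smul_eq_mul]
  fin_cases a <;> fin_cases b <;>
    simp [phi, Qext, Jb, Rb, Sb, Matrix.vecHead, Matrix.vecTail] <;> ring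

lemma jrs_eq_Upsilon {m n : ℕ} {M : Matrix (Fin 4 × Fin m) (Fin 4 × Fin n) ℝ}
    (hM : JRSSymmetric M) : M = Upsilon (Qext M) := by
  obtain ⟨h1, h2, h3⟩ := hM
  rw [avg_eq, h1, h2, h3]
  ext p q
  simp only [Matrix.smul_apply, Matrix.add_apply, smul_eq_mul]
  ring


lemma coe_sum {n : ℕ} (f : Fin n → ℝ) : ((∑ k, f k : ℝ) : K) = ∑ k, ((f k : ℝ) : K) := by
  rw [← Quaternion.algebraMap_def]
  exact map_sum (algebraMap ℝ K) f Finset.univ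

lemma sum_star_mul_self {n : ℕ} (u : Fin n → K) :
    ∑ k, star (u k) * u k = ((∑ k, normSq (u k) : ℝ) : K) := by
  rw [coe_sum]
  exact Finset.sum_congr rfl fun k _ => (Quaternion.star_mul_self (u k))

lemma coe_sandwich1 (r t : ℝ) (a b : K) (h : a * b = (t:K)) :
    (a * (r:K)) * ((r:K) * b) = ((r*r*t : ℝ):K) := by
  have h1 : (a * (r:K)) * ((r:K) * b) = a * ((r:K) * (r:K)) * b := by noncomm_ring
  rw [h1, ← Quaternion.coe_mul, ← Quaternion.coe_commutes, mul_assoc, h, ← Quaternion.coe_mul]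

lemma coe_sandwich2 (r t : ℝ) (a b : K) (h : a * b = (t:K)) :
    ((r:K) * a) * (b * (r:K)) = ((r*r*t : ℝ):K) := by
  have h1 : ((r:K) * a) * (b * (r:K)) = (r:K) * (a * b) * (r:K) := by noncomm_ring
  rw [h1, h, ← Quaternion.coe_mul, Quaternion.coe_commutes, ← Quaternion.coe_mul]
  ring_nf

lemma star_real_smul (r : ℝ) (q : K) : star (r • q) = r • star q := by
  rw [← Quaternion.coe_mul_eq_smul, ← Quaternion.coe_mul_eq_smul, StarMul.star_mul,
    Quaternion.star_coe, ← Quaternion.coe_commutes]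

lemma one_entry_star {n : ℕ} (i j : Fin n) :
    star ((1 : Matrix (Fin n) (Fin n) K) j i) = (1 : Matrix (Fin n) (Fin n) K) i j := by
  by_cases hij : i = j
  · subst hij; simp
  · rw [Matrix.one_apply_ne hij, Matrix.one_apply_ne (fun h => hij h.symm), star_zero]

set_option maxHeartbeats 1000000 in
lemma householder {m : ℕ} (x : Fin (m+1) → K) :
    ∃ (V : Matrix (Fin (m+1)) (Fin (m+1)) K) (c : ℝ),
      Vᴴ * V = 1 ∧ V * Vᴴ = 1 ∧ V *ᵥ x = fun k => if k = 0 then (c : K) else 0 := by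
  classical
  by_cases hx : x = 0
  · refine ⟨1, 0, by simp, by simp, ?_⟩
    subst hx
    funext k
    simp [Matrix.mulVec_zero]
  -- setup
  set N : ℝ := ∑ k, normSq (x k) with hNdef
  have hN : 0 < N := by
    obtain ⟨k0, hk0⟩ := Function.ne_iff.1 hx
    refine Finset.sum_pos' (fun k _ => normSq_nonneg) ⟨k0, Finset.mem_univ _, ?_⟩
    exact lt_of_le_of_ne normSq_nonneg (fun h => hk0 (normSq_eq_zero.1 h.symm))
  set c : ℝ := Real.sqrt N with hcdef
  have hc : 0 < c := Real.sqrt_pos.2 hN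
  have hc2 : c^2 = N := Real.sq_sqrt hN.le
  set x0 : K := x 0 with hx0def
  set c0 : ℝ := Real.sqrt (normSq x0) with hc0def
  have hc02 : c0^2 = normSq x0 := Real.sq_sqrt normSq_nonneg
  have hc0ne : x0 ≠ 0 → c0 ≠ 0 := by
    intro h0
    simp only [hc0def, ne_eq, Real.sqrt_eq_zero normSq_nonneg]
    exact fun h => h0 (normSq_eq_zero.1 h)
  have hc0z : x0 = 0 → c0 = 0 := by
    intro h; rw [hc0def, h, map_zero, Real.sqrt_zero]
  set α : K := if x0 = 0 then ((c : ℝ) : K) else ((c * c0⁻¹ : ℝ) : K) * x0 with hαdef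
  have hnα : normSq α = c^2 := by
    by_cases h0 : x0 = 0
    · rw [hαdef, if_pos h0, normSq_coe]
    · rw [hαdef, if_neg h0, _root_.map_mul, normSq_coe, ← hc02]
      have := hc0ne h0
      field_simp
  have hαSα : star α * α = ((c^2 : ℝ) : K) := by rw [Quaternion.star_mul_self, hnα]
  have hααS : α * star α = ((c^2 : ℝ) : K) := by rw [Quaternion.self_mul_star, hnα]
  have hαx0 : star α * x0 = ((c * c0 : ℝ) : K) := by
    by_cases h0 : x0 = 0
    · rw [h0, hc0z h0, mul_zero, mul_zero, Quaternion.coe_zero]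
    · have hc0 := hc0ne h0
      rw [hαdef, if_neg h0, StarMul.star_mul, Quaternion.star_coe, mul_assoc,
        Quaternion.coe_commutes, ← mul_assoc, Quaternion.star_mul_self, ← hc02,
        ← Quaternion.coe_mul]
      congr 1
      field_simp
  have hx0α : star x0 * α = ((c * c0 : ℝ) : K) := by
    by_cases h0 : x0 = 0
    · rw [h0, hc0z h0, star_zero, zero_mul, mul_zero, Quaternion.coe_zero]
    · have hc0 := hc0ne h0
      rw [hαdef, if_neg h0, Quaternion.coe_commutes, ← mul_assoc,
        Quaternion.star_mul_self, ← hc02, ← Quaternion.coe_mul]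
      congr 1
      field_simp
  set u : Fin (m+1) → K := fun k => x k - if k = 0 then α else 0 with hudef
  have hxu : ∀ k, x k = u k + (if k = 0 then α else 0) := by
    intro k
    simp only [hudef]
    exact (sub_add_cancel _ _).symm
  have hux : ∑ k, star (u k) * x k = ((c^2 - c*c0 : ℝ) : K) := by
    have h1 : ∀ k, star (u k) * x k
        = star (x k) * x k - (if k = 0 then star α * x k else 0) := by
      intro k
      by_cases hk : k = 0 <;> simp [hudef, hk, sub_mul]
    rw [Finset.sum_congr rfl fun k _ => h1 k, Finset.sum_sub_distrib,
      sum_star_mul_self, Finset.sum_ite_eq' Finset.univ (0 : Fin (m+1))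
        (fun k => star α * x k)]
    simp only [Finset.mem_univ, if_true, ← hx0def, hαx0, ← hNdef]
    rw [← hc2, Quaternion.coe_sub]
  set s : ℝ := ∑ k, normSq (u k) with hsdef
  have hsval : s = 2*(c^2 - c*c0) := by
    have h1 : ((s : ℝ) : K) = ∑ k, star (u k) * u k := (sum_star_mul_self u).symm
    have h2 : ∀ k, star (u k) * u k
        = star (u k) * x k - (if k = 0 then star (u k) * α else 0) := by
      intro k
      by_cases hk : k = 0
      · rw [if_pos hk]
        conv_lhs => rw [hudef]
        simp only [hk, if_pos rfl]
        rw [mul_sub]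
        congr 2 <;> rw [hudef] <;> simp [hk]
      · simp [hudef, hk]
    have h3 : star (u 0) * α = ((c*c0 - c^2 : ℝ) : K) := by
      have hu0 : u 0 = x0 - α := by rw [hudef]; simp [hx0def]
      rw [hu0, star_sub, sub_mul, hx0α, hαSα, ← Quaternion.coe_sub]
    rw [Finset.sum_congr rfl fun k _ => h2 k, Finset.sum_sub_distrib, hux,
      Finset.sum_ite_eq' Finset.univ (0 : Fin (m+1)) (fun k => star (u k) * α)] at h1
    simp only [Finset.mem_univ, if_true, h3, ← Quaternion.coe_sub] at h1
    have := Quaternion.coe_injective h1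
    linarith [this]
  -- first reflection
  have main1 : ∃ V1 : Matrix (Fin (m+1)) (Fin (m+1)) K,
      V1ᴴ = V1 ∧ V1 * V1 = 1 ∧ V1 *ᵥ x = fun k => if k = 0 then α else 0 := by
    by_cases hu : u = 0
    · refine ⟨1, by simp, by simp, ?_⟩
      rw [Matrix.one_mulVec]
      funext k
      have h0 : u k = 0 := by rw [hu]; rfl
      have h1 := hxu k
      rw [h0, zero_add] at h1
      exact h1
    · have hs : 0 < s := by
        obtain ⟨k0, hk0⟩ := Function.ne_iff.1 hu
        refine Finset.sum_pos' (fun k _ => normSq_nonneg) ⟨k0, Finset.mem_univ _, ?_⟩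
        exact lt_of_le_of_ne normSq_nonneg (fun h => hk0 (normSq_eq_zero.1 h.symm))
      have hsne : s ≠ 0 := hs.ne'
      set P : Matrix (Fin (m+1)) (Fin (m+1)) K :=
        Matrix.vecMulVec u (fun k => star (u k)) with hPdef
      have hPH : Pᴴ = P := by
        refine Matrix.ext fun i j => ?_
        simp only [hPdef, Matrix.conjTranspose_apply, Matrix.vecMulVec_apply,
          StarMul.star_mul, star_star]
      have hPP : P * P = s • P := by
        refine Matrix.ext fun i j => ?_
        rw [Matrix.mul_apply]
        have h1 : ∀ k, P i k * P k j = u i * ((star (u k) * u k) * star (u j)) := by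
          intro k
          simp only [hPdef, Matrix.vecMulVec_apply]
          noncomm_ring
        rw [Finset.sum_congr rfl fun k _ => h1 k, ← Finset.mul_sum, ← Finset.sum_mul,
          sum_star_mul_self]
        simp only [hPdef, Matrix.smul_apply, Matrix.vecMulVec_apply, ← hsdef]
        rw [← mul_assoc, ← Quaternion.coe_commutes, mul_assoc, Quaternion.coe_mul_eq_smul]
      set V1 : Matrix (Fin (m+1)) (Fin (m+1)) K := 1 - (2/s) • P with hV1def
      have hV1H : V1ᴴ = V1 := by
        refine Matrix.ext fun i j => ?_
        simp only [hV1def, Matrix.conjTranspose_apply, Matrix.sub_apply,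
          Matrix.smul_apply, star_sub, star_real_smul, one_entry_star]
        rw [show star (P j i) = P i j from by rw [← Matrix.conjTranspose_apply, hPH]]
      have hV1sq : V1 * V1 = 1 := by
        have hco : (2/s) * ((2/s) * s) = (2/s) + (2/s) := by field_simp; norm_num
        simp only [hV1def, sub_mul, mul_sub, one_mul, mul_one, Matrix.smul_mul,
          Matrix.mul_smul, hPP, smul_smul, hco, add_smul]
        abel
      refine ⟨V1, hV1H, hV1sq, ?_⟩
      have hPx : P *ᵥ x = fun i => ((c^2 - c*c0 : ℝ) : K) * u i := by
        funext i
        rw [Matrix.mulVec, dotProduct]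
        have h1 : ∀ k, P i k * x k = u i * (star (u k) * x k) := by
          intro k; simp only [hPdef, Matrix.vecMulVec_apply]; rw [mul_assoc]
        rw [Finset.sum_congr rfl fun k _ => h1 k, ← Finset.mul_sum, hux,
          Quaternion.coe_commutes]
      rw [hV1def, Matrix.sub_mulVec, Matrix.one_mulVec, Matrix.smul_mulVec, hPx]
      funext k
      have hcoef : (2/s) • (((c^2 - c*c0 : ℝ) : K) * u k) = u k := by
        rw [← Quaternion.coe_mul_eq_smul, ← mul_assoc, ← Quaternion.coe_mul]
        rw [show (2/s) * (c^2 - c*c0) = 1 by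
          rw [div_mul_eq_mul_div, ← hsval, div_self hsne]]
        rw [Quaternion.coe_one, one_mul]
      rw [Pi.sub_apply, Pi.smul_apply, hcoef]
      simp only [hudef]
      exact sub_sub_cancel _ _
  obtain ⟨V1, hV1H, hV1sq, hV1x⟩ := main1
  -- diagonal phase
  set d : Fin (m+1) → K := fun k => if k = 0 then ((c⁻¹ : ℝ) : K) * star α else 1 with hddef
  set D : Matrix (Fin (m+1)) (Fin (m+1)) K := Matrix.diagonal d with hDdef
  have hrr : c⁻¹ * c⁻¹ * c^2 = 1 := by field_simp
  have hd0 : d 0 = ((c⁻¹ : ℝ) : K) * star α := by simp [hddef]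
  have hdother : ∀ k : Fin (m+1), k ≠ 0 → d k = 1 := by
    intro k hk; simp [hddef, hk]
  have hd1 : ∀ k, star (d k) * d k = 1 := by
    intro k
    by_cases hk : k = 0
    · subst hk
      rw [hd0, StarMul.star_mul, star_star, Quaternion.star_coe]
      rw [coe_sandwich1 c⁻¹ (c^2) α (star α) hααS, hrr, Quaternion.coe_one]
    · rw [hdother k hk]; simp
  have hd2 : ∀ k, d k * star (d k) = 1 := by
    intro k
    by_cases hk : k = 0
    · subst hk
      rw [hd0, StarMul.star_mul, star_star, Quaternion.star_coe]
      rw [coe_sandwich2 c⁻¹ (c^2) (star α) α hαSα, hrr, Quaternion.coe_one]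
    · rw [hdother k hk]; simp
  have hDH : Dᴴ * D = 1 := by
    rw [hDdef, Matrix.diagonal_conjTranspose, Matrix.diagonal_mul_diagonal,
      ← Matrix.diagonal_one]
    exact congrArg Matrix.diagonal (funext fun k => hd1 k)
  have hDDH : D * Dᴴ = 1 := by
    rw [hDdef, Matrix.diagonal_conjTranspose, Matrix.diagonal_mul_diagonal,
      ← Matrix.diagonal_one]
    exact congrArg Matrix.diagonal (funext fun k => hd2 k)
  refine ⟨D * V1, c, ?_, ?_, ?_⟩
  · rw [Matrix.conjTranspose_mul]
    calc V1ᴴ * Dᴴ * (D * V1) = V1ᴴ * (Dᴴ * D * V1) := by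
          rw [Matrix.mul_assoc, Matrix.mul_assoc]
      _ = 1 := by rw [hDH, Matrix.one_mul, hV1H, hV1sq]
  · rw [Matrix.conjTranspose_mul]
    calc D * V1 * (V1ᴴ * Dᴴ) = D * (V1 * V1ᴴ * Dᴴ) := by
          rw [Matrix.mul_assoc, Matrix.mul_assoc]
      _ = 1 := by rw [hV1H, hV1sq, Matrix.one_mul, hDDH]
  · have hDy : ∀ (y : Fin (m+1) → K), D *ᵥ y = fun k => d k * y k := by
      intro y; funext k
      rw [hDdef]
      exact Matrix.mulVec_diagonal d y k
    rw [← Matrix.mulVec_mulVec, hV1x, hDy]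
    funext k
    by_cases hk : k = 0
    · subst hk
      rw [if_pos rfl, hd0, mul_assoc, hαSα, ← Quaternion.coe_mul]
      congr 1
      field_simp
    · rw [if_neg hk, hdother k hk, if_neg hk, mul_zero]

def ext1 {n : ℕ} (V : Matrix (Fin n) (Fin n) K) : Matrix (Fin (n+1)) (Fin (n+1)) K :=
  Matrix.of fun i j =>
    Fin.cases (Fin.cases 1 (fun _ => 0) j) (fun i' => Fin.cases 0 (fun j' => V i' j') j) i

@[simp] lemma ext1_zero_zero {n : ℕ} (V : Matrix (Fin n) (Fin n) K) : ext1 V 0 0 = 1 := rfl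
@[simp] lemma ext1_succ_zero {n : ℕ} (V : Matrix (Fin n) (Fin n) K) (i : Fin n) :
    ext1 V i.succ 0 = 0 := rfl
@[simp] lemma ext1_zero_succ {n : ℕ} (V : Matrix (Fin n) (Fin n) K) (j : Fin n) :
    ext1 V 0 j.succ = 0 := rfl
@[simp] lemma ext1_succ_succ {n : ℕ} (V : Matrix (Fin n) (Fin n) K) (i j : Fin n) :
    ext1 V i.succ j.succ = V i j := rfl

lemma ext1_mul {n : ℕ} (V W : Matrix (Fin n) (Fin n) K) :
    ext1 V * ext1 W = ext1 (V * W) := by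
  refine Matrix.ext fun i j => ?_
  rw [Matrix.mul_apply, Fin.sum_univ_succ]
  induction i using Fin.cases with
  | zero =>
    induction j using Fin.cases with
    | zero => simp
    | succ j' => simp
  | succ i' =>
    induction j using Fin.cases with
    | zero => simp
    | succ j' => simp [Matrix.mul_apply]

lemma ext1_conjTranspose {n : ℕ} (V : Matrix (Fin n) (Fin n) K) :
    (ext1 V)ᴴ = ext1 Vᴴ := by
  refine Matrix.ext fun i j => ?_
  rw [Matrix.conjTranspose_apply]
  induction i using Fin.cases with
  | zero =>
    induction j using Fin.cases with
    | zero => simp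
    | succ j' => simp
  | succ i' =>
    induction j using Fin.cases with
    | zero => simp
    | succ j' => simp [Matrix.conjTranspose_apply]

lemma ext1_one {n : ℕ} : ext1 (1 : Matrix (Fin n) (Fin n) K) = 1 := by
  refine Matrix.ext fun i j => ?_
  induction i using Fin.cases with
  | zero =>
    induction j using Fin.cases with
    | zero => simp
    | succ j' => simp [Matrix.one_apply, (Fin.succ_ne_zero j').symm]
  | succ i' =>
    induction j using Fin.cases with
    | zero => simp [Matrix.one_apply, Fin.succ_ne_zero i']
    | succ j' => simp [Matrix.one_apply, Fin.succ_inj]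

@[simp] lemma ext1_row0 {n : ℕ} (W : Matrix (Fin n) (Fin n) K) (b : Fin (n+1)) :
    ext1 W 0 b = if b = 0 then 1 else 0 := by
  induction b using Fin.cases with
  | zero => simp
  | succ b' => simp [Fin.succ_ne_zero]

@[simp] lemma ext1_col0 {n : ℕ} (W : Matrix (Fin n) (Fin n) K) (a : Fin (n+1)) :
    ext1 W a 0 = if a = 0 then 1 else 0 := by
  induction a using Fin.cases with
  | zero => simp
  | succ a' => simp [Fin.succ_ne_zero]

def QHessReal {n : ℕ} (B : Matrix (Fin n) (Fin n) K) : Prop :=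
  (∀ i j : Fin n, (j:ℕ)+1 < (i:ℕ) → B i j = 0) ∧
  (∀ i j : Fin n, (i:ℕ) = (j:ℕ)+1 →
    ((B i j).imI = 0 ∧ (B i j).imJ = 0 ∧ (B i j).imK = 0))

theorem quatHessAux : ∀ (n : ℕ) (A : Matrix (Fin (n+1)) (Fin (n+1)) K),
    ∃ U : Matrix (Fin (n+1)) (Fin (n+1)) K,
      Uᴴ * U = 1 ∧ U * Uᴴ = 1 ∧ (∀ i, U i 0 = if i = 0 then 1 else 0) ∧
      QHessReal (U * A * Uᴴ) := by
  intro n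
  induction n with
  | zero =>
    intro A
    refine ⟨1, by simp, by simp, ?_, ?_, ?_⟩
    · intro i
      fin_cases i
      simp [Matrix.one_apply]
    · intro i j hij
      exact absurd hij (by omega)
    · intro i j hij
      have hi := i.isLt
      have hj := j.isLt
      omega
  | succ n IH =>
    intro A
    obtain ⟨V, c, hV1, hV2, hVx⟩ := householder (fun k : Fin (n+1) => A k.succ 0)
    set U1 : Matrix (Fin (n+2)) (Fin (n+2)) K := ext1 V with hU1def
    set B1 : Matrix (Fin (n+2)) (Fin (n+2)) K := U1 * A * U1ᴴ with hB1def
    have hAU1H_col0 : ∀ a, (A * U1ᴴ) a 0 = A a 0 := by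
      intro a
      rw [Matrix.mul_apply]
      have h1 : ∀ b, A a b * U1ᴴ b 0 = if b = 0 then A a b else 0 := by
        intro b
        by_cases hb : b = 0
        · subst hb; simp [Matrix.conjTranspose_apply, hU1def]
        · simp [Matrix.conjTranspose_apply, hU1def, hb]
      rw [Finset.sum_congr rfl (fun b _ => h1 b),
        Finset.sum_ite_eq' Finset.univ (0 : Fin (n+2)) (fun b => A a b)]
      simp
    have hB1col : ∀ k : Fin (n+1), B1 k.succ 0 = if k = 0 then (c:K) else 0 := by
      intro k
      rw [hB1def, Matrix.mul_assoc, Matrix.mul_apply]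
      rw [Finset.sum_congr rfl (fun a _ => by rw [hAU1H_col0 a])]
      rw [Fin.sum_univ_succ]
      simp only [hU1def, ext1_succ_zero, zero_mul, zero_add, ext1_succ_succ]
      have hcf := congrFun hVx k
      simp only [Matrix.mulVec, dotProduct] at hcf
      exact hcf
    set C : Matrix (Fin (n+1)) (Fin (n+1)) K :=
      Matrix.of (fun k l => B1 k.succ l.succ) with hCdef
    obtain ⟨U2, h2a, h2b, h2col, h2H⟩ := IH C
    have hU1a : U1ᴴ * U1 = 1 := by
      rw [hU1def, ext1_conjTranspose, ext1_mul, hV1, ext1_one]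
    have hU1b : U1 * U1ᴴ = 1 := by
      rw [hU1def, ext1_conjTranspose, ext1_mul, hV2, ext1_one]
    have hEa : (ext1 U2)ᴴ * ext1 U2 = 1 := by
      rw [ext1_conjTranspose, ext1_mul, h2a, ext1_one]
    have hEb : ext1 U2 * (ext1 U2)ᴴ = 1 := by
      rw [ext1_conjTranspose, ext1_mul, h2b, ext1_one]
    set U : Matrix (Fin (n+2)) (Fin (n+2)) K := ext1 U2 * U1 with hUdef
    have hBeq : U * A * Uᴴ = ext1 U2 * B1 * (ext1 U2)ᴴ := by
      rw [hUdef, hB1def, Matrix.conjTranspose_mul]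
      simp only [Matrix.mul_assoc]
    set B2 : Matrix (Fin (n+2)) (Fin (n+2)) K := ext1 U2 * B1 * (ext1 U2)ᴴ with hB2def
    have hEB1col : ∀ k : Fin (n+1), (ext1 U2 * B1) k.succ 0 = if k = 0 then (c:K) else 0 := by
      intro k
      rw [Matrix.mul_apply, Fin.sum_univ_succ, ext1_succ_zero, zero_mul, zero_add]
      rw [Finset.sum_congr rfl (fun a _ => by rw [ext1_succ_succ, hB1col a, mul_ite, mul_zero])]
      rw [Finset.sum_ite_eq' Finset.univ (0 : Fin (n+1)) (fun a => U2 k a * (c:K))]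
      simp only [Finset.mem_univ, if_true, h2col k]
      by_cases hk : k = 0 <;> simp [hk]
    have hB2col : ∀ k : Fin (n+1), B2 k.succ 0 = if k = 0 then (c:K) else 0 := by
      intro k
      rw [hB2def, Matrix.mul_apply]
      rw [Finset.sum_congr rfl (fun b _ => by
        rw [Matrix.conjTranspose_apply, ext1_row0, apply_ite star, star_one, star_zero,
          mul_ite, mul_one, mul_zero])]
      rw [Finset.sum_ite_eq' Finset.univ (0 : Fin (n+2)) (fun b => (ext1 U2 * B1) k.succ b)]
      simp only [Finset.mem_univ, if_true]
      exact hEB1col k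
    have hB2succ : ∀ k l : Fin (n+1), B2 k.succ l.succ = (U2 * C * U2ᴴ) k l := by
      intro k l
      rw [hB2def, Matrix.mul_apply, Fin.sum_univ_succ]
      have hz : (ext1 U2)ᴴ 0 l.succ = 0 := by
        rw [Matrix.conjTranspose_apply, ext1_succ_zero, star_zero]
      rw [hz, mul_zero, zero_add]
      rw [Matrix.mul_apply (M := U2 * C), Finset.sum_congr rfl (fun b _ => by
        rw [Matrix.conjTranspose_apply (M := ext1 U2), ext1_succ_succ,
          ← Matrix.conjTranspose_apply (M := U2)])]
      refine Finset.sum_congr rfl fun b _ => ?_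
      congr 1
      rw [Matrix.mul_apply, Fin.sum_univ_succ, ext1_succ_zero, zero_mul, zero_add,
        Matrix.mul_apply]
      refine Finset.sum_congr rfl fun a _ => ?_
      rw [ext1_succ_succ]
      rfl
    refine ⟨U, ?_, ?_, ?_, ?_⟩
    · rw [hUdef, Matrix.conjTranspose_mul]
      calc U1ᴴ * (ext1 U2)ᴴ * (ext1 U2 * U1)
          = U1ᴴ * ((ext1 U2)ᴴ * ext1 U2 * U1) := by simp only [Matrix.mul_assoc]
        _ = 1 := by rw [hEa, Matrix.one_mul, hU1a]
    · rw [hUdef, Matrix.conjTranspose_mul]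
      calc ext1 U2 * U1 * (U1ᴴ * (ext1 U2)ᴴ)
          = ext1 U2 * (U1 * U1ᴴ * (ext1 U2)ᴴ) := by simp only [Matrix.mul_assoc]
        _ = 1 := by rw [hU1b, Matrix.one_mul, hEb]
    · intro i
      rw [hUdef, Matrix.mul_apply]
      rw [Finset.sum_congr rfl (fun a _ => by
        rw [hU1def, ext1_col0, mul_ite, mul_one, mul_zero])]
      rw [Finset.sum_ite_eq' Finset.univ (0 : Fin (n+2)) (fun a => ext1 U2 i a)]
      simp only [Finset.mem_univ, if_true]
      exact ext1_col0 U2 i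
    · rw [hBeq]
      constructor
      · intro i j hij
        induction j using Fin.cases with
        | zero =>
          induction i using Fin.cases with
          | zero => simp at hij
          | succ k =>
            rw [hB2col k, if_neg]
            intro hk0
            subst hk0
            simp at hij
        | succ l =>
          induction i using Fin.cases with
          | zero => simp at hij
          | succ k =>
            rw [hB2succ k l]
            refine h2H.1 k l ?_
            simp only [Fin.val_succ] at hij
            omega
      · intro i j hij
        induction j using Fin.cases with
        | zero =>
          induction i using Fin.cases with
          | zero => simp at hij
          | succ k =>
            have hk0 : k = 0 := by
              simp only [Fin.val_succ, Fin.val_zero] at hij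
              exact Fin.ext (by simp only [Fin.val_zero]; omega)
            subst hk0
            rw [hB2col 0, if_pos rfl]
            simp
        | succ l =>
          induction i using Fin.cases with
          | zero => simp at hij
          | succ k =>
            rw [hB2succ k l]
            refine h2H.2 k l ?_
            simp only [Fin.val_succ] at hij
            omega

theorem quatHessAll (n : ℕ) (A : Matrix (Fin n) (Fin n) K) :
    ∃ U : Matrix (Fin n) (Fin n) K,
      Uᴴ * U = 1 ∧ U * Uᴴ = 1 ∧ QHessReal (U * A * Uᴴ) := by
  cases n with
  | zero =>
    exact ⟨1, by simp, by simp, ⟨fun i => i.elim0, fun i => i.elim0⟩⟩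
  | succ m =>
    obtain ⟨U, h1, h2, _, h4⟩ := quatHessAux m A
    exact ⟨U, h1, h2, h4⟩

end JRSAux

/-- Every JRS-symmetric matrix can be reduced to upper
JRS-Hessenberg form by an orthogonally JRS-symplectic similarity. -/
theorem jrs_hessenberg_reduction {n : ℕ}
    (M : Matrix (Fin 4 × Fin n) (Fin 4 × Fin n) ℝ) (hM : JRSSymmetric M) :
    ∃ (W : Matrix (Fin 4 × Fin n) (Fin 4 × Fin n) ℝ)
      (H0 H1 H2 H3 : Matrix (Fin n) (Fin n) ℝ),
      OrthoJRSSymplectic W ∧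
      W * M * Wᵀ = upsilonBlocks H0 H1 H2 H3 ∧
      UpperHessenbergM H0 ∧
      UpperTriangularM H1 ∧ UpperTriangularM H2 ∧ UpperTriangularM H3 := by
  classical
  obtain ⟨U, hU1, hU2, hH⟩ := JRSAux.quatHessAll n (JRSAux.Qext M)
  set B : Matrix (Fin n) (Fin n) ℍ[ℝ] := U * JRSAux.Qext M * Uᴴ with hBdef
  have hM2 : M = Upsilon (JRSAux.Qext M) := JRSAux.jrs_eq_Upsilon hM
  have hWWT : Upsilon U * (Upsilon U)ᵀ = 1 := by
    rw [← JRSAux.Upsilon_conjTranspose, ← JRSAux.Upsilon_mul, hU2, JRSAux.Upsilon_one]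
  refine ⟨Upsilon U, (fun i j => (B i j).re), (fun i j => (B i j).imI),
    (fun i j => (B i j).imJ), (fun i j => (B i j).imK), ⟨?_, ?_, ?_, ?_⟩, ?_, ?_, ?_, ?_, ?_⟩
  · rw [← JRSAux.Upsilon_conjTranspose, ← JRSAux.Upsilon_mul, hU1, JRSAux.Upsilon_one]
  · calc Upsilon U * JJ n * (Upsilon U)ᵀ
        = JJ n * Upsilon U * (Upsilon U)ᵀ := by rw [← JRSAux.JJ_comm_Upsilon]
      _ = JJ n * (Upsilon U * (Upsilon U)ᵀ) := by rw [Matrix.mul_assoc]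
      _ = JJ n := by rw [hWWT, Matrix.mul_one]
  · calc Upsilon U * RRm n * (Upsilon U)ᵀ
        = RRm n * Upsilon U * (Upsilon U)ᵀ := by rw [← JRSAux.RR_comm_Upsilon]
      _ = RRm n * (Upsilon U * (Upsilon U)ᵀ) := by rw [Matrix.mul_assoc]
      _ = RRm n := by rw [hWWT, Matrix.mul_one]
  · calc Upsilon U * SSm n * (Upsilon U)ᵀ
        = SSm n * Upsilon U * (Upsilon U)ᵀ := by rw [← JRSAux.SS_comm_Upsilon]
      _ = SSm n * (Upsilon U * (Upsilon U)ᵀ) := by rw [Matrix.mul_assoc]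
      _ = SSm n := by rw [hWWT, Matrix.mul_one]
  · conv_lhs => rw [hM2]
    rw [← JRSAux.Upsilon_conjTranspose, ← JRSAux.Upsilon_mul, ← JRSAux.Upsilon_mul]
    rfl
  · intro i j hij
    have h0 := hH.1 i j hij
    rw [hBdef] at h0
    simp only [hBdef, h0, Quaternion.re_zero]
  · intro i j hij
    rcases Nat.lt_or_ge ((j:ℕ)+1) (i:ℕ) with h | h
    · have h0 := hH.1 i j h
      rw [hBdef] at h0
      simp only [hBdef, h0, Quaternion.imI_zero]
    · have hieq : (i:ℕ) = (j:ℕ)+1 := by omega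
      have h0 := (hH.2 i j hieq).1
      rw [hBdef] at h0
      exact h0
  · intro i j hij
    rcases Nat.lt_or_ge ((j:ℕ)+1) (i:ℕ) with h | h
    · have h0 := hH.1 i j h
      rw [hBdef] at h0
      simp only [hBdef, h0, Quaternion.imJ_zero]
    · have hieq : (i:ℕ) = (j:ℕ)+1 := by omega
      have h0 := (hH.2 i j hieq).2.1
      rw [hBdef] at h0
      exact h0
  · intro i j hij
    rcases Nat.lt_or_ge ((j:ℕ)+1) (i:ℕ) with h | h
    · have h0 := hH.1 i j h
      rw [hBdef] at h0
      simp only [hBdef, h0, Quaternion.imK_zero]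
    · have hieq : (i:ℕ) = (j:ℕ)+1 := by omega
      have h0 := (hH.2 i j hieq).2.2
      rw [hBdef] at h0
      exact h0
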